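/- Let ε > 0, λ ∈ ℝ, and let C = [[a₁, a₀], [a₀, a₂]] be a symmetric real 2×2 matrix; set β₀ = (a₁+a₂)/4, β₁ = (a₁−a₂)/4, β₂ = a₀/2. Then the matrix J^ε := ∫₀^∞ exp(-λrA)·C·exp(λrA)·e^{-2εr} dr has entries J^ε₁₁ = β₀/ε + β₁·ε/(λ²+ε²) − β₂·λ/(λ²+ε²), J^ε₂₂ = β₀/ε − β₁·ε/(λ²+ε²) + β₂·λ/(λ²+ε²), and J^ε₁₂ = J^ε₂₁ = β₁·λ/(λ²+ε²) + β₂·ε/(λ²+ε²). -/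

import Mathlib

open Matrix

/-- The 2×2 matrix `A = [[0, 1], [-1, 0]]`. -/
noncomputable def matA : Matrix (Fin 2) (Fin 2) ℝ := !![0, 1; -1, 0]

open Set Real Filter MeasureTheory

/-- The ring hom from ℂ to 2×2 real matrices. -/
noncomputable def cmat : ℂ →+* Matrix (Fin 2) (Fin 2) ℝ where
  toFun z := !![z.re, z.im; -z.im, z.re]
  map_one' := by ext i j; fin_cases i <;> fin_cases j <;> simp
  map_mul' z w := by
    ext i j
    fin_cases i <;> fin_cases j <;>
      simp [Matrix.mul_apply, Fin.sum_univ_two, Complex.mul_re, Complex.mul_im] <;> ring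
  map_zero' := by ext i j; fin_cases i <;> fin_cases j <;> simp
  map_add' z w := by ext i j; fin_cases i <;> fin_cases j <;> simp [Complex.add_re, Complex.add_im] <;> ring

lemma cmat_continuous : Continuous cmat := by
  apply continuous_matrix
  intro i j
  fin_cases i <;> fin_cases j <;>
    simp [cmat] <;> fun_prop


attribute [local instance] Matrix.linftyOpNormedRing Matrix.linftyOpNormedAlgebra Matrix.linftyOpNormedSpace

lemma exp_rot (θ : ℝ) : NormedSpace.exp (θ • matA) =
    !![Real.cos θ, Real.sin θ; -Real.sin θ, Real.cos θ] := by
  have h1 : θ • matA = cmat (θ * Complex.I) := by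
    ext i j
    fin_cases i <;> fin_cases j <;> simp [matA, cmat]
  rw [h1]
  erw [← NormedSpace.map_exp cmat cmat_continuous]
  have h2 : NormedSpace.exp ((θ : ℂ) * Complex.I) = Complex.exp (θ * Complex.I) := by
    rw [Complex.exp_eq_exp_ℂ]
  rw [h2, Complex.exp_mul_I]
  ext i j
  fin_cases i <;> fin_cases j <;>
    simp [cmat, Complex.add_re, Complex.add_im, Complex.cos_ofReal_re, Complex.sin_ofReal_re]

lemma intgOn_exp {a : ℝ} (ha : 0 < a) :
    IntegrableOn (fun r : ℝ => Real.exp (-(a * r))) (Ioi 0) := by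
  simpa [neg_mul] using exp_neg_integrableOn_Ioi 0 ha

lemma intgOn_cos {a : ℝ} (b : ℝ) (ha : 0 < a) :
    IntegrableOn (fun r : ℝ => Real.cos (b * r) * Real.exp (-(a * r))) (Ioi 0) := by
  refine (intgOn_exp ha).mono' ?_ ?_
  · exact (Continuous.mul (by fun_prop) (by fun_prop)).aestronglyMeasurable
  · filter_upwards with x
    rw [norm_mul, Real.norm_eq_abs, Real.norm_eq_abs, Real.abs_exp]
    nlinarith [Real.abs_cos_le_one (b * x), Real.exp_pos (-(a * x)), abs_nonneg (Real.cos (b*x))]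

lemma intgOn_sin {a : ℝ} (b : ℝ) (ha : 0 < a) :
    IntegrableOn (fun r : ℝ => Real.sin (b * r) * Real.exp (-(a * r))) (Ioi 0) := by
  refine (intgOn_exp ha).mono' ?_ ?_
  · exact (Continuous.mul (by fun_prop) (by fun_prop)).aestronglyMeasurable
  · filter_upwards with x
    rw [norm_mul, Real.norm_eq_abs, Real.norm_eq_abs, Real.abs_exp]
    nlinarith [Real.abs_sin_le_one (b * x), Real.exp_pos (-(a * x)), abs_nonneg (Real.sin (b*x))]

lemma tendsto_exp_neg_mul {a : ℝ} (ha : 0 < a) :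
    Tendsto (fun r : ℝ => Real.exp (-(a * r))) atTop (nhds 0) := by
  apply Real.tendsto_exp_atBot.comp
  have : Tendsto (fun r : ℝ => a * r) atTop atTop := Tendsto.const_mul_atTop ha tendsto_id
  simpa using tendsto_neg_atBot_iff.2 this

lemma intExp {a : ℝ} (ha : 0 < a) :
    ∫ r in Ioi (0:ℝ), Real.exp (-(a * r)) = 1 / a := by
  have h := integral_Ioi_of_hasDerivAt_of_tendsto' (f := fun r : ℝ => -Real.exp (-(a * r)) / a)
    (f' := fun r : ℝ => Real.exp (-(a * r))) (a := 0) (m := 0)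
    (fun x _ => by
      have ha' : HasDerivAt (fun r : ℝ => -(a * r)) (-a) x := by
        have := ((hasDerivAt_id x).const_mul a).neg
        simp only [id_eq, mul_one] at this
        exact this
      have := (ha'.exp.neg).div_const a
      refine this.congr_deriv ?_
      field_simp)
    (intgOn_exp ha)
    (by simpa using ((tendsto_exp_neg_mul ha).neg).div_const a)
  rw [h]; field_simp
  simp

lemma intCos {a : ℝ} (b : ℝ) (ha : 0 < a) :
    ∫ r in Ioi (0:ℝ), Real.cos (b * r) * Real.exp (-(a * r)) = a / (a ^ 2 + b ^ 2) := by
  have hD : a ^ 2 + b ^ 2 ≠ 0 := by positivity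
  have h := integral_Ioi_of_hasDerivAt_of_tendsto'
    (f := fun r : ℝ => Real.exp (-(a * r)) * (b * Real.sin (b * r) - a * Real.cos (b * r)) / (a ^ 2 + b ^ 2))
    (f' := fun r : ℝ => Real.cos (b * r) * Real.exp (-(a * r))) (a := 0) (m := 0)
    (fun x _ => by
      have hb' : HasDerivAt (fun r : ℝ => b * r) b x := by
        simpa using (hasDerivAt_id x).const_mul b
      have ha' : HasDerivAt (fun r : ℝ => -(a * r)) (-a) x := by
        have := ((hasDerivAt_id x).const_mul a).neg
        simp only [id_eq, mul_one] at this
        exact this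
      have := (ha'.exp.mul ((hb'.sin.const_mul b).sub (hb'.cos.const_mul a))).div_const
        (a ^ 2 + b ^ 2)
      refine this.congr_deriv ?_
      simp only [Pi.sub_apply, Pi.add_apply]
      field_simp
      ring)
    (intgOn_cos b ha)
    (by
      have : Tendsto (fun r : ℝ => Real.exp (-(a * r)) *
          (b * Real.sin (b * r) - a * Real.cos (b * r))) atTop (nhds 0) := by
        apply (tendsto_exp_neg_mul ha).zero_mul_isBoundedUnder_le
        refine isBoundedUnder_of ⟨|b| + |a|, fun x => ?_⟩
        simp only [Function.comp, Real.norm_eq_abs]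
        calc |b * Real.sin (b * x) - a * Real.cos (b * x)|
            ≤ |b * Real.sin (b * x)| + |a * Real.cos (b * x)| := abs_sub _ _
          _ ≤ |b| + |a| := by
              rw [abs_mul, abs_mul]
              have h1 := Real.abs_sin_le_one (b * x)
              have h2 := Real.abs_cos_le_one (b * x)
              nlinarith [abs_nonneg b, abs_nonneg a]
      simpa using this.div_const (a ^ 2 + b ^ 2))
  rw [h]
  field_simp
  simp

lemma intSin {a : ℝ} (b : ℝ) (ha : 0 < a) :
    ∫ r in Ioi (0:ℝ), Real.sin (b * r) * Real.exp (-(a * r)) = b / (a ^ 2 + b ^ 2) := by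
  have hD : a ^ 2 + b ^ 2 ≠ 0 := by positivity
  have h := integral_Ioi_of_hasDerivAt_of_tendsto'
    (f := fun r : ℝ => -(Real.exp (-(a * r)) * (a * Real.sin (b * r) + b * Real.cos (b * r))) / (a ^ 2 + b ^ 2))
    (f' := fun r : ℝ => Real.sin (b * r) * Real.exp (-(a * r))) (a := 0) (m := 0)
    (fun x _ => by
      have hb' : HasDerivAt (fun r : ℝ => b * r) b x := by
        simpa using (hasDerivAt_id x).const_mul b
      have ha' : HasDerivAt (fun r : ℝ => -(a * r)) (-a) x := by
        have := ((hasDerivAt_id x).const_mul a).neg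
        simp only [id_eq, mul_one] at this
        exact this
      have := ((ha'.exp.mul ((hb'.sin.const_mul a).add (hb'.cos.const_mul b))).neg).div_const
        (a ^ 2 + b ^ 2)
      refine this.congr_deriv ?_
      simp only [Pi.sub_apply, Pi.add_apply]
      field_simp
      ring)
    (intgOn_sin b ha)
    (by
      have : Tendsto (fun r : ℝ => Real.exp (-(a * r)) *
          (a * Real.sin (b * r) + b * Real.cos (b * r))) atTop (nhds 0) := by
        apply (tendsto_exp_neg_mul ha).zero_mul_isBoundedUnder_le
        refine isBoundedUnder_of ⟨|a| + |b|, fun x => ?_⟩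
        simp only [Function.comp, Real.norm_eq_abs]
        calc |a * Real.sin (b * x) + b * Real.cos (b * x)|
            ≤ |a * Real.sin (b * x)| + |b * Real.cos (b * x)| := abs_add_le _ _
          _ ≤ |a| + |b| := by
              rw [abs_mul, abs_mul]
              have h1 := Real.abs_sin_le_one (b * x)
              have h2 := Real.abs_cos_le_one (b * x)
              nlinarith [abs_nonneg b, abs_nonneg a]
      simpa using this.neg.div_const (a ^ 2 + b ^ 2))
  rw [h]
  field_simp
  simp

lemma combo {ε : ℝ} (lam : ℝ) (hε : 0 < ε) (p q s : ℝ) :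
    ∫ r in Ioi (0:ℝ), (p * Real.exp (-(2 * ε * r)) +
      (q * (Real.cos (2 * lam * r) * Real.exp (-(2 * ε * r))) +
       s * (Real.sin (2 * lam * r) * Real.exp (-(2 * ε * r))))) =
    p * (1 / (2 * ε)) + (q * ((2 * ε) / ((2 * ε) ^ 2 + (2 * lam) ^ 2)) +
      s * ((2 * lam) / ((2 * ε) ^ 2 + (2 * lam) ^ 2))) := by
  have h2ε : 0 < 2 * ε := by linarith
  have hA : IntegrableOn (fun r : ℝ => p * Real.exp (-(2 * ε * r))) (Ioi 0) :=
    (intgOn_exp h2ε).const_mul p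
  have hB : IntegrableOn (fun r : ℝ => q * (Real.cos (2 * lam * r) * Real.exp (-(2 * ε * r)))) (Ioi 0) :=
    (intgOn_cos (2 * lam) h2ε).const_mul q
  have hS : IntegrableOn (fun r : ℝ => s * (Real.sin (2 * lam * r) * Real.exp (-(2 * ε * r)))) (Ioi 0) :=
    (intgOn_sin (2 * lam) h2ε).const_mul s
  have hBS : IntegrableOn (fun r : ℝ => q * (Real.cos (2 * lam * r) * Real.exp (-(2 * ε * r))) +
      s * (Real.sin (2 * lam * r) * Real.exp (-(2 * ε * r)))) (Ioi 0) := hB.add hS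
  rw [MeasureTheory.integral_add hA hBS, MeasureTheory.integral_add hB hS,
    MeasureTheory.integral_const_mul, MeasureTheory.integral_const_mul,
    MeasureTheory.integral_const_mul, intExp h2ε, intCos (2 * lam) h2ε, intSin (2 * lam) h2ε]

/-- Let `ε > 0`, `λ ∈ ℝ`, and `C = [[a₁, a₀], [a₀, a₂]]` symmetric; with
`β₀ = (a₁+a₂)/4`, `β₁ = (a₁−a₂)/4`, `β₂ = a₀/2`, the matrix
`J^ε := ∫₀^∞ exp(-λrA)·C·exp(λrA)·e^{-2εr} dr` has the stated entries. -/
theorem J_eps_entries (ε : ℝ) (hε : 0 < ε) (lam : ℝ) (a₀ a₁ a₂ : ℝ)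
    (C : Matrix (Fin 2) (Fin 2) ℝ) (hC : C = !![a₁, a₀; a₀, a₂])
    (β₀ β₁ β₂ : ℝ) (hβ₀ : β₀ = (a₁ + a₂) / 4) (hβ₁ : β₁ = (a₁ - a₂) / 4)
    (hβ₂ : β₂ = a₀ / 2)
    (J : Matrix (Fin 2) (Fin 2) ℝ)
    (hJ : J = Matrix.of (fun i j =>
      ∫ r in Set.Ioi (0 : ℝ),
        (NormedSpace.exp (-(lam * r) • matA) * C *
          NormedSpace.exp ((lam * r) • matA)) i j * Real.exp (-(2 * ε * r)))) :
    J 0 0 = β₀ / ε + β₁ * ε / (lam ^ 2 + ε ^ 2) - β₂ * lam / (lam ^ 2 + ε ^ 2) ∧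
    J 1 1 = β₀ / ε - β₁ * ε / (lam ^ 2 + ε ^ 2) + β₂ * lam / (lam ^ 2 + ε ^ 2) ∧
    J 0 1 = β₁ * lam / (lam ^ 2 + ε ^ 2) + β₂ * ε / (lam ^ 2 + ε ^ 2) ∧
    J 1 0 = β₁ * lam / (lam ^ 2 + ε ^ 2) + β₂ * ε / (lam ^ 2 + ε ^ 2) := by
  have hden : lam ^ 2 + ε ^ 2 ≠ 0 := by positivity
  have hεne : ε ≠ 0 := ne_of_gt hε
  have trig : ∀ r : ℝ,
      Real.cos (2 * lam * r) = 2 * Real.cos (lam * r) ^ 2 - 1 ∧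
      Real.sin (2 * lam * r) = 2 * Real.sin (lam * r) * Real.cos (lam * r) := fun r => by
    constructor
    · rw [show 2 * lam * r = 2 * (lam * r) by ring, Real.cos_two_mul]
    · rw [show 2 * lam * r = 2 * (lam * r) by ring, Real.sin_two_mul]
  refine ⟨?_, ?_, ?_, ?_⟩
  · rw [hJ]
    simp only [Matrix.of_apply]
    have hfun : (fun r : ℝ =>
        (NormedSpace.exp (-(lam * r) • matA) * C *
          NormedSpace.exp ((lam * r) • matA)) 0 0 * Real.exp (-(2 * ε * r))) =
        fun r : ℝ => (2 * β₀) * Real.exp (-(2 * ε * r)) +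
          ((2 * β₁) * (Real.cos (2 * lam * r) * Real.exp (-(2 * ε * r))) +
           (-(2 * β₂)) * (Real.sin (2 * lam * r) * Real.exp (-(2 * ε * r)))) := by
      funext r
      rw [exp_rot, exp_rot, hC, (trig r).1, (trig r).2]
      have hs := Real.sin_sq_add_cos_sq (lam * r)
      simp only [Matrix.mul_apply, Fin.sum_univ_two, Matrix.of_apply, Matrix.cons_val',
        Matrix.cons_val_zero, Matrix.cons_val_one, Matrix.head_cons, Matrix.empty_val',
        Matrix.cons_val_fin_one, Matrix.head_fin_const, Real.cos_neg, Real.sin_neg,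
        hβ₀, hβ₁, hβ₂]
      linear_combination (Real.exp (-(2 * ε * r)) * a₂) * hs
    rw [hfun, combo lam hε]
    simp only [hβ₀, hβ₁, hβ₂]
    field_simp
    ring
  · rw [hJ]
    simp only [Matrix.of_apply]
    have hfun : (fun r : ℝ =>
        (NormedSpace.exp (-(lam * r) • matA) * C *
          NormedSpace.exp ((lam * r) • matA)) 1 1 * Real.exp (-(2 * ε * r))) =
        fun r : ℝ => (2 * β₀) * Real.exp (-(2 * ε * r)) +
          ((-(2 * β₁)) * (Real.cos (2 * lam * r) * Real.exp (-(2 * ε * r))) +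
           (2 * β₂) * (Real.sin (2 * lam * r) * Real.exp (-(2 * ε * r)))) := by
      funext r
      rw [exp_rot, exp_rot, hC, (trig r).1, (trig r).2]
      have hs := Real.sin_sq_add_cos_sq (lam * r)
      simp only [Matrix.mul_apply, Fin.sum_univ_two, Matrix.of_apply, Matrix.cons_val',
        Matrix.cons_val_zero, Matrix.cons_val_one, Matrix.head_cons, Matrix.empty_val',
        Matrix.cons_val_fin_one, Matrix.head_fin_const, Real.cos_neg, Real.sin_neg,
        hβ₀, hβ₁, hβ₂]
      linear_combination (Real.exp (-(2 * ε * r)) * a₁) * hs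
    rw [hfun, combo lam hε]
    simp only [hβ₀, hβ₁, hβ₂]
    field_simp
    ring
  · rw [hJ]
    simp only [Matrix.of_apply]
    have hfun : (fun r : ℝ =>
        (NormedSpace.exp (-(lam * r) • matA) * C *
          NormedSpace.exp ((lam * r) • matA)) 0 1 * Real.exp (-(2 * ε * r))) =
        fun r : ℝ => ((0:ℝ)) * Real.exp (-(2 * ε * r)) +
          ((2 * β₂) * (Real.cos (2 * lam * r) * Real.exp (-(2 * ε * r))) +
           (2 * β₁) * (Real.sin (2 * lam * r) * Real.exp (-(2 * ε * r)))) := by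
      funext r
      rw [exp_rot, exp_rot, hC, (trig r).1, (trig r).2]
      have hs := Real.sin_sq_add_cos_sq (lam * r)
      simp only [Matrix.mul_apply, Fin.sum_univ_two, Matrix.of_apply, Matrix.cons_val',
        Matrix.cons_val_zero, Matrix.cons_val_one, Matrix.head_cons, Matrix.empty_val',
        Matrix.cons_val_fin_one, Matrix.head_fin_const, Real.cos_neg, Real.sin_neg,
        hβ₀, hβ₁, hβ₂]
      linear_combination (-(Real.exp (-(2 * ε * r)) * a₀)) * hs
    rw [hfun, combo lam hε]
    simp only [hβ₀, hβ₁, hβ₂]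
    field_simp
    ring
  · rw [hJ]
    simp only [Matrix.of_apply]
    have hfun : (fun r : ℝ =>
        (NormedSpace.exp (-(lam * r) • matA) * C *
          NormedSpace.exp ((lam * r) • matA)) 1 0 * Real.exp (-(2 * ε * r))) =
        fun r : ℝ => ((0:ℝ)) * Real.exp (-(2 * ε * r)) +
          ((2 * β₂) * (Real.cos (2 * lam * r) * Real.exp (-(2 * ε * r))) +
           (2 * β₁) * (Real.sin (2 * lam * r) * Real.exp (-(2 * ε * r)))) := by
      funext r
      rw [exp_rot, exp_rot, hC, (trig r).1, (trig r).2]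
      have hs := Real.sin_sq_add_cos_sq (lam * r)
      simp only [Matrix.mul_apply, Fin.sum_univ_two, Matrix.of_apply, Matrix.cons_val',
        Matrix.cons_val_zero, Matrix.cons_val_one, Matrix.head_cons, Matrix.empty_val',
        Matrix.cons_val_fin_one, Matrix.head_fin_const, Real.cos_neg, Real.sin_neg,
        hβ₀, hβ₁, hβ₂]
      linear_combination (-(Real.exp (-(2 * ε * r)) * a₀)) * hs
    rw [hfun, combo lam hε]
    simp only [hβ₀, hβ₁, hβ₂]
    field_simp
    ring
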